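/- arXiv:2506.21870 — 4 statements merged into one kernel-verified Lean document; each statement's English description precedes it below -/
import Mathlib

section
/- Let (A,[·,·],·) be a Poisson algebra and P: A → A a Rota–Baxter operator of weight λ. Define [a,b]_P = [P(a),b] + [a,P(b)] + λ[a,b] and a·_P b = P(a)·b + a·P(b) + λ a·b. Then (A,[·,·]_P,·_P) is a Poisson algebra, and P is a Poisson algebra homomorphism from (A,[·,·]_P,·_P) to (A,[·,·],·). -/
open TensorProduct

section Preamble

variable {k A : Type*} [Field k] [AddCommGroup A] [Module k A]

/-- The Poisson algebra axioms for a pair of bilinear operations `br` (the Lie bracket)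
and `mul` (the commutative associative product), including the Leibniz compatibility. -/
structure IsPoisson {k A : Type*} [Field k] [AddCommGroup A] [Module k A]
    (br mul : A →ₗ[k] A →ₗ[k] A) : Prop where
  antisymm : ∀ a b, br a b = - br b a
  jacobi : ∀ a b c, br a (br b c) = br (br a b) c + br b (br a c)
  comm : ∀ a b, mul a b = mul b a
  assoc : ∀ a b c, mul (mul a b) c = mul a (mul b c)
  leibniz : ∀ a b c, br a (mul b c) = mul (br a b) c + mul b (br a c)

/-- `r ↦ r₊`, where `⟨r₊(x*), y*⟩ = ⟨r, x* ⊗ y*⟩`. -/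
noncomputable def rPlus : (A ⊗[k] A) →ₗ[k] Module.Dual k A →ₗ[k] A :=
  TensorProduct.lift <| LinearMap.mk₂ k
    (fun a b => (Module.Dual.eval k A a).smulRight b)
    (fun a a' b => by ext f; simp [add_smul])
    (fun c a b => by ext f; simp [smul_smul])
    (fun a b b' => by ext f; simp)
    (fun c a b => by ext f; simp [smul_smul, mul_comm])

/-- The flip `τ : A ⊗ A → A ⊗ A`. -/
noncomputable def tauT : (A ⊗[k] A) →ₗ[k] A ⊗[k] A := (TensorProduct.comm k A A).toLinearMap

/-- `r ↦ r₋`, where `⟨r₊(x*), y*⟩ = ⟨r, x* ⊗ y*⟩ = −⟨x*, r₋(y*)⟩`. -/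
noncomputable def rMinus : (A ⊗[k] A) →ₗ[k] Module.Dual k A →ₗ[k] A :=
  - (rPlus ∘ₗ tauT)

@[simp] lemma rPlus_tmul (a b : A) (f : Module.Dual k A) :
    rPlus (a ⊗ₜ[k] b) f = f a • b := rfl

@[simp] lemma dualMap_add_apply (f g : A →ₗ[k] A) (y : Module.Dual k A) :
    (f + g).dualMap y = f.dualMap y + g.dualMap y := by ext a; simp

@[simp] lemma dualMap_smul_apply (c : k) (f : A →ₗ[k] A) (y : Module.Dual k A) :
    (c • f).dualMap y = c • f.dualMap y := by ext a; simp

@[simp] lemma dualMap_neg_apply (f : A →ₗ[k] A) (y : Module.Dual k A) :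
    (-f).dualMap y = - f.dualMap y := by ext a; simp

noncomputable def T1213 (m : A →ₗ[k] A →ₗ[k] A) :
    (A ⊗[k] A) ⊗[k] (A ⊗[k] A) →ₗ[k] A ⊗[k] (A ⊗[k] A) :=
  (TensorProduct.map (TensorProduct.lift m) LinearMap.id) ∘ₗ
    (TensorProduct.tensorTensorTensorComm k A A A A).toLinearMap

noncomputable def T1323 (m : A →ₗ[k] A →ₗ[k] A) :
    (A ⊗[k] A) ⊗[k] (A ⊗[k] A) →ₗ[k] A ⊗[k] (A ⊗[k] A) :=
  (TensorProduct.assoc k A A A).toLinearMap ∘ₗ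
    (TensorProduct.map LinearMap.id (TensorProduct.lift m)) ∘ₗ
    (TensorProduct.tensorTensorTensorComm k A A A A).toLinearMap

noncomputable def T2312 (m : A →ₗ[k] A →ₗ[k] A) :
    (A ⊗[k] A) ⊗[k] (A ⊗[k] A) →ₗ[k] A ⊗[k] (A ⊗[k] A) :=
  (TensorProduct.leftComm k A A A).toLinearMap ∘ₗ
    (TensorProduct.map (TensorProduct.lift m ∘ₗ (TensorProduct.comm k A A).toLinearMap)
      LinearMap.id) ∘ₗ
    (TensorProduct.tensorTensorTensorComm k A A A A).toLinearMap ∘ₗ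
    (TensorProduct.map (TensorProduct.comm k A A).toLinearMap LinearMap.id)

noncomputable def T1223 (m : A →ₗ[k] A →ₗ[k] A) :
    (A ⊗[k] A) ⊗[k] (A ⊗[k] A) →ₗ[k] A ⊗[k] (A ⊗[k] A) :=
  (TensorProduct.leftComm k A A A).toLinearMap ∘ₗ
    (TensorProduct.map (TensorProduct.lift m) LinearMap.id) ∘ₗ
    (TensorProduct.tensorTensorTensorComm k A A A A).toLinearMap ∘ₗ
    (TensorProduct.map (TensorProduct.comm k A A).toLinearMap LinearMap.id)

/-- `C(r) = [r₁₂,r₁₃] + [r₁₃,r₂₃] + [r₁₂,r₂₃]` for the bracket `br`. -/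
noncomputable def cybe (br : A →ₗ[k] A →ₗ[k] A) (r : A ⊗[k] A) : A ⊗[k] (A ⊗[k] A) :=
  T1213 br (r ⊗ₜ[k] r) + T1323 br (r ⊗ₜ[k] r) + T1223 br (r ⊗ₜ[k] r)

/-- `A(r) = r₁₂·r₁₃ + r₁₃·r₂₃ − r₂₃·r₁₂` for the product `mul`. -/
noncomputable def aybe (mul : A →ₗ[k] A →ₗ[k] A) (r : A ⊗[k] A) : A ⊗[k] (A ⊗[k] A) :=
  T1213 mul (r ⊗ₜ[k] r) + T1323 mul (r ⊗ₜ[k] r) - T2312 mul (r ⊗ₜ[k] r)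

/-- `r` is a solution of the Poisson Yang–Baxter equation: `C(r) = 0` and `A(r) = 0`. -/
def IsPYBESolution (br mul : A →ₗ[k] A →ₗ[k] A) (r : A ⊗[k] A) : Prop :=
  cybe br r = 0 ∧ aybe mul r = 0

variable (k A) in
/-- `σ₁₃ : a ⊗ b ⊗ c ↦ c ⊗ b ⊗ a`. -/
noncomputable def sigma13 : A ⊗[k] (A ⊗[k] A) →ₗ[k] A ⊗[k] (A ⊗[k] A) :=
  (TensorProduct.map LinearMap.id (TensorProduct.comm k A A).toLinearMap) ∘ₗ
    (TensorProduct.leftComm k A A A).toLinearMap ∘ₗ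
    (TensorProduct.map LinearMap.id (TensorProduct.comm k A A).toLinearMap)

/-- `s ∈ A ⊗ A` is `(ad, L)`-invariant:
`(ad(a)⊗id + id⊗ad(a))(s) = 0` and `(L(a)⊗id − id⊗L(a))(s) = 0` for all `a`. -/
def IsAdLInvariant (br mul : A →ₗ[k] A →ₗ[k] A) (s : A ⊗[k] A) : Prop :=
  ∀ a : A,
    TensorProduct.map (br a) LinearMap.id s + TensorProduct.map LinearMap.id (br a) s = 0 ∧
    TensorProduct.map (mul a) LinearMap.id s - TensorProduct.map LinearMap.id (mul a) s = 0

/-- The bracket `[x*,y*]_r = −ad*(r₊(x*))y* + ad*(r₋(y*))x*` on the dual space. -/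
noncomputable def dualBr (br : A →ₗ[k] A →ₗ[k] A) (r : A ⊗[k] A) :
    Module.Dual k A →ₗ[k] Module.Dual k A →ₗ[k] Module.Dual k A :=
  LinearMap.mk₂ k
    (fun x y => - (br (rPlus r x)).dualMap y + (br (rMinus r y)).dualMap x)
    (fun x x' y => by simp [map_add]; try abel)
    (fun c x y => by simp [map_smul, smul_add]; try abel)
    (fun x y y' => by simp [map_add]; try abel)
    (fun c x y => by simp [map_smul, smul_add]; try abel)

/-- The product `x*·_r y* = L*(r₊(x*))y* + L*(r₋(y*))x*` on the dual space. -/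
noncomputable def dualMul (mul : A →ₗ[k] A →ₗ[k] A) (r : A ⊗[k] A) :
    Module.Dual k A →ₗ[k] Module.Dual k A →ₗ[k] Module.Dual k A :=
  LinearMap.mk₂ k
    (fun x y => (mul (rPlus r x)).dualMap y + (mul (rMinus r y)).dualMap x)
    (fun x x' y => by simp [map_add]; try abel)
    (fun c x y => by simp [map_smul, smul_add]; try abel)
    (fun x y y' => by simp [map_add]; try abel)
    (fun c x y => by simp [map_smul, smul_add]; try abel)

/-- The descendent operation `a ∘_P b = (P a) ∘ b + a ∘ (P b) + λ a ∘ b`. -/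
noncomputable def descOp (m : A →ₗ[k] A →ₗ[k] A) (lam : k) (P : A →ₗ[k] A) :
    A →ₗ[k] A →ₗ[k] A :=
  LinearMap.mk₂ k
    (fun a b => m (P a) b + m a (P b) + lam • m a b)
    (fun a a' b => by simp [map_add, smul_add]; try abel)
    (fun c a b => by simp [map_smul, smul_add, smul_smul, mul_comm]; try abel)
    (fun a b b' => by simp [map_add, smul_add]; try abel)
    (fun c a b => by simp [map_smul, smul_add, smul_smul, mul_comm]; try abel)

/-- `P` is a Rota–Baxter operator of weight `λ` on the Poisson algebra `(A, br, mul)`. -/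
def IsRotaBaxter (br mul : A →ₗ[k] A →ₗ[k] A) (lam : k) (P : A →ₗ[k] A) : Prop :=
  (∀ a b, br (P a) (P b) = P (br (P a) b + br a (P b) + lam • br a b)) ∧
  (∀ a b, mul (P a) (P b) = P (mul (P a) b + mul a (P b) + lam • mul a b))

/-- `((A, br, mul), B, P)` is a quadratic Rota–Baxter Poisson algebra of weight `λ`. -/
structure IsQuadraticRotaBaxter {k A : Type*} [Field k] [AddCommGroup A] [Module k A]
    (br mul : A →ₗ[k] A →ₗ[k] A) (B : A →ₗ[k] A →ₗ[k] k) (lam : k) (P : A →ₗ[k] A) :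
    Prop where
  poisson : IsPoisson br mul
  symm : ∀ a b, B a b = B b a
  nondeg : ∀ a, (∀ b, B a b = 0) → a = 0
  br_invariant : ∀ a b c, B (br a b) c = B a (br b c)
  mul_invariant : ∀ a b c, B (mul a b) c = B a (mul b c)
  rb : IsRotaBaxter br mul lam P
  compat : ∀ a b, B a (P b) + B (P a) b + lam • B a b = 0

/-- The semidirect-product bracket on `A ⊕ A*`:
`[(a,x*),(b,y*)] = ([a,b], −ad*(a)y* + ad*(b)x*)`. -/
noncomputable def sdBr (br : A →ₗ[k] A →ₗ[k] A) :
    (A × Module.Dual k A) →ₗ[k] (A × Module.Dual k A) →ₗ[k] (A × Module.Dual k A) :=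
  LinearMap.mk₂ k
    (fun p q => (br p.1 q.1, - (br p.1).dualMap q.2 + (br q.1).dualMap p.2))
    (fun p p' q => by simp [Prod.ext_iff, map_add]; try abel)
    (fun c p q => by simp [Prod.ext_iff, map_smul, smul_add]; try abel)
    (fun p q q' => by simp [Prod.ext_iff, map_add]; try abel)
    (fun c p q => by simp [Prod.ext_iff, map_smul, smul_add]; try abel)

/-- The semidirect-product multiplication on `A ⊕ A*`:
`(a,x*)·(b,y*) = (a·b, L*(a)y* + L*(b)x*)`. -/
noncomputable def sdMul (mul : A →ₗ[k] A →ₗ[k] A) :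
    (A × Module.Dual k A) →ₗ[k] (A × Module.Dual k A) →ₗ[k] (A × Module.Dual k A) :=
  LinearMap.mk₂ k
    (fun p q => (mul p.1 q.1, (mul p.1).dualMap q.2 + (mul q.1).dualMap p.2))
    (fun p p' q => by simp [Prod.ext_iff, map_add]; try abel)
    (fun c p q => by simp [Prod.ext_iff, map_smul, smul_add]; try abel)
    (fun p q q' => by simp [Prod.ext_iff, map_add]; try abel)
    (fun c p q => by simp [Prod.ext_iff, map_smul, smul_add]; try abel)

/-- The canonical bilinear form `𝔅_d((a,x*),(b,y*)) = ⟨a,y*⟩ + ⟨b,x*⟩` on `A ⊕ A*`. -/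
noncomputable def sdForm :
    (A × Module.Dual k A) →ₗ[k] (A × Module.Dual k A) →ₗ[k] k :=
  LinearMap.mk₂ k
    (fun p q => q.2 p.1 + p.2 q.1)
    (fun p p' q => by simp; try ring)
    (fun c p q => by simp [smul_add, smul_smul]; try ring)
    (fun p q q' => by simp; try ring)
    (fun c p q => by simp [smul_add, smul_smul]; try ring)

end Preamble

/-- the descendent operations of a Rota–Baxter operator of weight `λ` on a
Poisson algebra form a Poisson algebra, and `P` is a Poisson algebra homomorphism from the
descendent Poisson algebra to the original one. -/
theorem statement10 {k A : Type*} [Field k] [AddCommGroup A] [Module k A]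
    (br mul : A →ₗ[k] A →ₗ[k] A) (hP : IsPoisson br mul)
    (lam : k) (P : A →ₗ[k] A) (hRB : IsRotaBaxter br mul lam P) :
    IsPoisson (descOp br lam P) (descOp mul lam P) ∧
    (∀ a b, P (descOp br lam P a b) = br (P a) (P b)) ∧
    (∀ a b, P (descOp mul lam P a b) = mul (P a) (P b)) := by
  have hD : ∀ (m : A →ₗ[k] A →ₗ[k] A) (a b : A),
      descOp m lam P a b = m (P a) b + m a (P b) + lam • m a b := fun m a b => rfl
  have hbr' : ∀ a b, P (br (P a) b) + P (br a (P b)) + lam • P (br a b) = br (P a) (P b) := by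
    intro a b
    rw [hRB.1 a b, map_add, map_add, map_smul]
  have hmul' : ∀ a b, P (mul (P a) b) + P (mul a (P b)) + lam • P (mul a b) = mul (P a) (P b) := by
    intro a b
    rw [hRB.2 a b, map_add, map_add, map_smul]
  have hbr : ∀ a b, P (descOp br lam P a b) = br (P a) (P b) := by
    intro a b
    rw [hD, map_add, map_add, map_smul, hbr']
  have hmul : ∀ a b, P (descOp mul lam P a b) = mul (P a) (P b) := by
    intro a b
    rw [hD, map_add, map_add, map_smul, hmul']
  refine ⟨⟨?_, ?_, ?_, ?_, ?_⟩, hbr, hmul⟩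
  · intro a b
    simp only [hD]
    rw [hP.antisymm (P a) b, hP.antisymm a (P b), hP.antisymm a b]
    module
  · intro a b c
    simp only [hD]
    rw [← hRB.1 b c, ← hRB.1 a b, ← hRB.1 a c]
    simp only [map_add, map_smul, LinearMap.add_apply, LinearMap.smul_apply]
    rw [hP.jacobi (P a) (P b) c, hP.jacobi (P a) b (P c), hP.jacobi (P a) b c,
      hP.jacobi a (P b) (P c), hP.jacobi a (P b) c, hP.jacobi a b (P c), hP.jacobi a b c]
    module
  · intro a b
    simp only [hD]
    rw [hP.comm (P a) b, hP.comm a (P b), hP.comm a b]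
    module
  · intro a b c
    simp only [hD]
    rw [← hRB.2 a b, ← hRB.2 b c]
    simp only [map_add, map_smul, LinearMap.add_apply, LinearMap.smul_apply]
    rw [hP.assoc (P a) (P b) c, hP.assoc (P a) b (P c), hP.assoc (P a) b c,
      hP.assoc a (P b) (P c), hP.assoc a (P b) c, hP.assoc a b (P c), hP.assoc a b c]
    module
  · intro a b c
    simp only [hD]
    rw [← hRB.2 b c, ← hRB.1 a b, ← hRB.1 a c]
    simp only [map_add, map_smul, LinearMap.add_apply, LinearMap.smul_apply]
    rw [hP.leibniz (P a) (P b) c, hP.leibniz (P a) b (P c), hP.leibniz (P a) b c,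
      hP.leibniz a (P b) (P c), hP.leibniz a (P b) c, hP.leibniz a b (P c), hP.leibniz a b c]
    module
end

section
/- Let (A,[·,·]_A,·_A) be a finite-dimensional Poisson algebra over a field and P: A → A a Rota–Baxter operator of weight λ on it. Let 𝔄 = A ⊕ A* carry the semi-direct product Poisson structure [(a,x*),(b,y*)] = ([a,b]_A, −ad*(a)y* + ad*(b)x*), (a,x*)·(b,y*) = (a·_A b, L*(a)y* + L*(b)x*), and the form 𝔅_d((a,x*),(b,y*)) = ⟨a,y*⟩ + ⟨b,x*⟩. Then ((𝔄,[·,·],·), 𝔅_d, P + P̃*) is a quadratic Rota–Baxter Poisson algebra of weight λ, where P̃ = −λ·id − P and (P + P̃*)(a,x*) = (P(a), P̃*(x*)). -/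
open TensorProduct

@[simp] lemma sdBr_fst {k A : Type*} [Field k] [AddCommGroup A] [Module k A]
    (br : A →ₗ[k] A →ₗ[k] A) (p q : A × Module.Dual k A) :
    (sdBr br p q).1 = br p.1 q.1 := rfl

@[simp] lemma sdBr_snd {k A : Type*} [Field k] [AddCommGroup A] [Module k A]
    (br : A →ₗ[k] A →ₗ[k] A) (p q : A × Module.Dual k A) :
    (sdBr br p q).2 = - (br p.1).dualMap q.2 + (br q.1).dualMap p.2 := rfl

@[simp] lemma sdMul_fst {k A : Type*} [Field k] [AddCommGroup A] [Module k A]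
    (mul : A →ₗ[k] A →ₗ[k] A) (p q : A × Module.Dual k A) :
    (sdMul mul p q).1 = mul p.1 q.1 := rfl

@[simp] lemma sdMul_snd {k A : Type*} [Field k] [AddCommGroup A] [Module k A]
    (mul : A →ₗ[k] A →ₗ[k] A) (p q : A × Module.Dual k A) :
    (sdMul mul p q).2 = (mul p.1).dualMap q.2 + (mul q.1).dualMap p.2 := rfl

@[simp] lemma sdForm_apply {k A : Type*} [Field k] [AddCommGroup A] [Module k A]
    (p q : A × Module.Dual k A) :
    sdForm p q = q.2 p.1 + p.2 q.1 := rfl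

/-- a Rota–Baxter operator `P` of weight `λ` on a Poisson algebra `A` yields
the quadratic Rota–Baxter Poisson algebra `((A ⋉ A*, [·,·], ·), 𝔅_d, P + P̃*)` of weight
`λ`, where `P̃ = −λ·id − P`. -/
theorem statement12 {k A : Type*} [Field k] [AddCommGroup A] [Module k A]
    [FiniteDimensional k A]
    (br mul : A →ₗ[k] A →ₗ[k] A) (hP : IsPoisson br mul)
    (lam : k) (P : A →ₗ[k] A) (hRB : IsRotaBaxter br mul lam P) :
    IsQuadraticRotaBaxter (sdBr br) (sdMul mul) sdForm lam
      (P.prodMap (((-lam) • (LinearMap.id : A →ₗ[k] A) - P).dualMap)) := by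
  obtain ⟨hRB1, hRB2⟩ := hRB
  refine ⟨⟨?_, ?_, ?_, ?_, ?_⟩, ?_, ?_, ?_, ?_, ⟨?_, ?_⟩, ?_⟩
  · -- antisymm
    intro p q
    refine Prod.ext (hP.antisymm _ _) ?_
    simp only [sdBr_snd, Prod.snd_neg]
    abel
  · -- jacobi
    intro p q r
    refine Prod.ext (hP.jacobi _ _ _) (LinearMap.ext fun w => ?_)
    obtain ⟨a, x⟩ := p; obtain ⟨b, y⟩ := q; obtain ⟨c, z⟩ := r
    simp only [sdBr_fst, sdBr_snd, Prod.fst_add, Prod.snd_add, Prod.snd_neg,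
      LinearMap.add_apply, LinearMap.neg_apply, LinearMap.dualMap_apply, map_add, map_neg]
    have h1 := congrArg x (hP.jacobi b c w)
    have h2 := congrArg z (hP.jacobi a b w)
    have h3 := congrArg y (hP.jacobi a c w)
    simp only [map_add] at h1 h2 h3
    linear_combination -h1 - h2 + h3
  · -- comm
    intro p q
    refine Prod.ext (hP.comm _ _) ?_
    simp only [sdMul_snd]
    abel
  · -- assoc
    intro p q r
    refine Prod.ext (hP.assoc _ _ _) (LinearMap.ext fun w => ?_)
    obtain ⟨a, x⟩ := p; obtain ⟨b, y⟩ := q; obtain ⟨c, z⟩ := r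
    simp only [sdMul_fst, sdMul_snd, Prod.fst_add, Prod.snd_add,
      LinearMap.add_apply, LinearMap.dualMap_apply, map_add]
    have h1 := congrArg z (hP.assoc a b w)
    have h2 := congrArg y (hP.assoc a c w)
    have h3 := congrArg x (hP.assoc b c w)
    have h4 := congrArg z (congrArg (fun t => mul t w) (hP.comm a b))
    have h5 := congrArg y (congrArg (fun t => mul t w) (hP.comm a c))
    have h6 := congrArg z (hP.assoc b a w)
    have h7 := congrArg y (hP.assoc c a w)
    simp only [map_add] at *
    linear_combination h4 + h6 - h2 + h5 + h7 - h3
  · -- leibniz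
    intro p q r
    refine Prod.ext (hP.leibniz _ _ _) (LinearMap.ext fun w => ?_)
    obtain ⟨a, x⟩ := p; obtain ⟨b, y⟩ := q; obtain ⟨c, z⟩ := r
    simp only [sdBr_fst, sdBr_snd, sdMul_fst, sdMul_snd, Prod.fst_add, Prod.snd_add,
      LinearMap.add_apply, LinearMap.neg_apply, LinearMap.dualMap_apply, map_add, map_neg]
    have key : br (mul b c) w = mul c (br b w) + mul b (br c w) := by
      rw [hP.antisymm (mul b c) w, hP.leibniz w b c, hP.antisymm w b, hP.antisymm w c]
      simp only [map_neg, LinearMap.neg_apply, neg_add, neg_neg]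
      rw [hP.comm (br b w) c]
    have h1 := congrArg z (hP.leibniz a b w)
    have h2 := congrArg y (hP.leibniz a c w)
    have h3 := congrArg x (hP.leibniz b c w)
    have h4 := congrArg x (hP.leibniz c b w)
    have h9 := congrArg (fun t => x (mul t w)) (hP.antisymm c b)
    have hk := congrArg x key
    simp only [map_add, map_neg, LinearMap.neg_apply] at h1 h2 h3 h4 h9 hk
    linear_combination h1 + h2 + hk - h3 - h4 - h9
  · -- symm
    intro p q
    simp only [sdForm_apply]
    ring
  · -- nondeg
    intro p h
    have h1 : p.1 = 0 := by
      rw [← Module.forall_dual_apply_eq_zero_iff k]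
      intro f
      have := h (0, f)
      simpa using this
    have h2 : p.2 = 0 := by
      ext b
      have := h (b, 0)
      simpa [h1] using this
    exact Prod.ext h1 h2
  · -- br invariant
    intro p q r
    obtain ⟨a, x⟩ := p; obtain ⟨b, y⟩ := q; obtain ⟨c, z⟩ := r
    simp only [sdForm_apply, sdBr_fst, sdBr_snd, LinearMap.add_apply, LinearMap.neg_apply,
      LinearMap.dualMap_apply]
    have h1 := congrArg z (hP.antisymm a b)
    have h2 := congrArg y (hP.antisymm a c)
    simp only [map_neg] at h1 h2
    linear_combination h1 - h2
  · -- mul invariant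
    intro p q r
    obtain ⟨a, x⟩ := p; obtain ⟨b, y⟩ := q; obtain ⟨c, z⟩ := r
    simp only [sdForm_apply, sdMul_fst, sdMul_snd, LinearMap.add_apply,
      LinearMap.dualMap_apply]
    have h1 := congrArg z (hP.comm a b)
    have h2 := congrArg y (hP.comm a c)
    linear_combination h1 + h2
  · -- RB bracket
    intro p q
    refine Prod.ext ?_ (LinearMap.ext fun w => ?_)
    · obtain ⟨a, x⟩ := p; obtain ⟨b, y⟩ := q
      simpa using hRB1 a b
    · obtain ⟨a, x⟩ := p; obtain ⟨b, y⟩ := q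
      simp only [sdBr_fst, sdBr_snd, Prod.fst_add, Prod.snd_add, Prod.smul_fst,
        Prod.smul_snd, LinearMap.prodMap_apply, Prod.fst, Prod.snd,
        LinearMap.add_apply, LinearMap.neg_apply, LinearMap.smul_apply,
        LinearMap.dualMap_apply, LinearMap.sub_apply, LinearMap.id_coe, id_eq,
        map_add, map_sub, map_neg, map_smul, Prod.smul_fst, Prod.smul_snd, smul_eq_mul,
        neg_smul]
      have h1 := congrArg x (hRB1 b w)
      have h2 := congrArg y (hRB1 a w)
      simp only [map_add, map_smul, smul_eq_mul] at h1 h2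
      linear_combination h1 - h2
  · -- RB mul
    intro p q
    refine Prod.ext ?_ (LinearMap.ext fun w => ?_)
    · obtain ⟨a, x⟩ := p; obtain ⟨b, y⟩ := q
      simpa using hRB2 a b
    · obtain ⟨a, x⟩ := p; obtain ⟨b, y⟩ := q
      simp only [sdMul_fst, sdMul_snd, Prod.fst_add, Prod.snd_add, Prod.smul_fst,
        Prod.smul_snd, LinearMap.prodMap_apply, Prod.fst, Prod.snd,
        LinearMap.add_apply, LinearMap.neg_apply, LinearMap.smul_apply,
        LinearMap.dualMap_apply, LinearMap.sub_apply, LinearMap.id_coe, id_eq,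
        map_add, map_sub, map_neg, map_smul, Prod.smul_fst, Prod.smul_snd, smul_eq_mul,
        neg_smul]
      have h1 := congrArg x (hRB2 b w)
      have h2 := congrArg y (hRB2 a w)
      simp only [map_add, map_smul, smul_eq_mul] at h1 h2
      linear_combination h1 + h2
  · -- compat
    intro p q
    simp only [sdForm_apply, LinearMap.prodMap_apply, LinearMap.dualMap_apply,
      LinearMap.sub_apply, LinearMap.neg_apply, LinearMap.smul_apply, LinearMap.id_coe,
      id_eq, map_sub, map_smul, map_neg, neg_smul, smul_eq_mul]
    ring
end

section
/- Let ((A,[·,·],·),𝔅,P) be a finite-dimensional quadratic Rota–Baxter Poisson algebra of weight 0, I_𝔅: A* → A the linear isomorphism induced by 𝔅, and r ∈ A⊗A the 2-tensor form of P ∘ I_𝔅, i.e., ⟨r, x*⊗y*⟩ = ⟨(P ∘ I_𝔅)(x*), y*⟩. Then r is antisymmetric (τ(r) = −r) and r is a solution of the Poisson Yang–Baxter equation in (A,[·,·],·); hence r induces a triangular Poisson bialgebra. -/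
open TensorProduct

section Helpers

variable {k A : Type*} [Field k] [AddCommGroup A] [Module k A]

noncomputable def contractL (M : Type*) [AddCommGroup M] [Module k M]
    (f : Module.Dual k A) : A ⊗[k] M →ₗ[k] M :=
  TensorProduct.lift ((LinearMap.lsmul k M) ∘ₗ f)

@[simp] lemma contractL_tmul {M : Type*} [AddCommGroup M] [Module k M]
    (f : Module.Dual k A) (a : A) (m : M) :
    contractL M f (a ⊗ₜ[k] m) = f a • m := rfl

lemma expandT {M ι : Type*} [AddCommGroup M] [Module k M] [Fintype ι]
    (b : Module.Basis ι k A) (t : A ⊗[k] M) :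
    t = ∑ i, b i ⊗ₜ[k] contractL M (b.coord i) t := by
  induction t using TensorProduct.induction_on with
  | zero => simp
  | tmul a m =>
      have h1 : ∀ i, b i ⊗ₜ[k] (b.coord i a • m) = (b.coord i a • b i) ⊗ₜ[k] m := fun i => by
        rw [TensorProduct.tmul_smul, TensorProduct.smul_tmul']
      simp only [contractL_tmul, h1]
      rw [← TensorProduct.sum_tmul]
      congr 1
      simp only [Module.Basis.coord_apply]
      exact (b.sum_repr a).symm
  | add x y hx hy =>
      simp only [map_add, TensorProduct.tmul_add, Finset.sum_add_distrib]
      rw [← hx, ← hy]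

lemma sepT [FiniteDimensional k A] {M : Type*} [AddCommGroup M] [Module k M]
    (t : A ⊗[k] M) (h : ∀ f : Module.Dual k A, contractL M f t = 0) : t = 0 := by
  rw [expandT (Module.finBasis k A) t]
  simp [h]

lemma sep2 [FiniteDimensional k A] (t : A ⊗[k] A)
    (h : ∀ f g : Module.Dual k A, g (contractL A f t) = 0) : t = 0 :=
  sepT t fun f => (Module.forall_dual_apply_eq_zero_iff k _).mp (h f)

lemma sep3 [FiniteDimensional k A] (t : A ⊗[k] (A ⊗[k] A))
    (h : ∀ f g h' : Module.Dual k A,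
      h' (contractL A g (contractL (A ⊗[k] A) f t)) = 0) : t = 0 :=
  sepT t fun f => sep2 _ fun g h' => h f g h'

lemma sum_eval {ι : Type*} [Fintype ι] (Q : Module.Dual k A →ₗ[k] A)
    (b : Module.Basis ι k A) (ψ χ : Module.Dual k A) :
    ∑ i, ψ (b i) * χ (Q (b.coord i)) = χ (Q ψ) := by
  conv_rhs => rw [← b.sum_dual_apply_smul_coord ψ]
  simp only [map_sum, map_smul, LinearMap.map_smul, smul_eq_mul]

@[simp] lemma T1213_tmul (m : A →ₗ[k] A →ₗ[k] A) (a b c d : A) :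
    T1213 m ((a ⊗ₜ[k] b) ⊗ₜ[k] (c ⊗ₜ[k] d)) = m a c ⊗ₜ[k] (b ⊗ₜ[k] d) := by
  simp [T1213]

@[simp] lemma T1323_tmul (m : A →ₗ[k] A →ₗ[k] A) (a b c d : A) :
    T1323 m ((a ⊗ₜ[k] b) ⊗ₜ[k] (c ⊗ₜ[k] d)) = a ⊗ₜ[k] (c ⊗ₜ[k] m b d) := by
  simp [T1323]

@[simp] lemma T1223_tmul (m : A →ₗ[k] A →ₗ[k] A) (a b c d : A) :
    T1223 m ((a ⊗ₜ[k] b) ⊗ₜ[k] (c ⊗ₜ[k] d)) = a ⊗ₜ[k] (m b c ⊗ₜ[k] d) := by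
  simp [T1223]

@[simp] lemma T2312_tmul (m : A →ₗ[k] A →ₗ[k] A) (a b c d : A) :
    T2312 m ((a ⊗ₜ[k] b) ⊗ₜ[k] (c ⊗ₜ[k] d)) = a ⊗ₜ[k] (m c b ⊗ₜ[k] d) := by
  simp [T2312]

@[simp] lemma tauT_tmul' (a b : A) : tauT (a ⊗ₜ[k] b) = b ⊗ₜ[k] a := rfl

end Helpers

/-- a quadratic Rota–Baxter Poisson algebra of weight `0` yields an
antisymmetric solution of the Poisson Yang–Baxter equation, hence a triangular Poisson
bialgebra. -/
theorem statement14 {k A : Type*} [Field k] [AddCommGroup A] [Module k A]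
    [FiniteDimensional k A]
    (br mul : A →ₗ[k] A →ₗ[k] A) (B : A →ₗ[k] A →ₗ[k] k) (P : A →ₗ[k] A)
    (hQ : IsQuadraticRotaBaxter br mul B 0 P)
    (IB : Module.Dual k A ≃ₗ[k] A) (hIB : ∀ a b, IB.symm a b = B a b)
    (r : A ⊗[k] A) (hr : ∀ x y : Module.Dual k A, y (rPlus r x) = y (P (IB x))) :
    tauT r = - r ∧ IsPYBESolution br mul r := by
  classical
  obtain ⟨hpoisson, hBsymm, _hnd, hbrinv, hmulinv, ⟨hrbbr, hrbmul⟩, hcompat⟩ := hQ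
  set Q : Module.Dual k A →ₗ[k] A := P ∘ₗ IB.toLinearMap with hQdef
  have hQapp : ∀ x : Module.Dual k A, Q x = P (IB x) := fun x => rfl
  have hQ' : ∀ x : Module.Dual k A, rPlus r x = Q x := by
    intro x
    rw [← sub_eq_zero]
    refine (Module.forall_dual_apply_eq_zero_iff k _).mp fun y => ?_
    rw [map_sub, hr x y, hQapp, sub_self]
  have hfB : ∀ (f : Module.Dual k A) (x : A), f x = B (IB f) x := fun f x => by
    rw [← hIB, IB.symm_apply_apply]
  have hIBB : ∀ z : A, IB (B z) = z := fun z => by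
    have h : IB.symm z = B z := LinearMap.ext fun x => hIB z x
    rw [← h, IB.apply_symm_apply]
  have hQform : ∀ (ψ : Module.Dual k A) (z : A), (∀ y, ψ y = B z y) → Q ψ = P z := by
    intro ψ z hz
    have h : ψ = B z := LinearMap.ext hz
    rw [hQapp, h, hIBB]
  have hskew : ∀ a b : A, B a (P b) = - B (P a) b := by
    intro a b
    have h := hcompat a b
    rw [zero_smul, add_zero] at h
    exact eq_neg_of_add_eq_zero_left h
  have hrbbr' : ∀ a b, br (P a) (P b) = P (br (P a) b) + P (br a (P b)) := by
    intro a b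
    rw [hrbbr a b, zero_smul, add_zero, map_add]
  have hrbmul' : ∀ a b, mul (P a) (P b) = P (mul (P a) b) + P (mul a (P b)) := by
    intro a b
    rw [hrbmul a b, zero_smul, add_zero, map_add]
  set e : Module.Basis (Fin (Module.finrank k A)) k A := Module.finBasis k A with he
  have hcr : ∀ (t : A ⊗[k] A) (f : Module.Dual k A), contractL A f t = rPlus t f := by
    intro t f
    induction t using TensorProduct.induction_on with
    | zero => simp
    | tmul a b => simp
    | add x y hx hy => simp [map_add, hx, hy]
  have hrexp : r = ∑ i, e i ⊗ₜ[k] Q (e.coord i) := by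
    conv_lhs => rw [expandT e r]
    exact Finset.sum_congr rfl fun i _ => by rw [hcr, hQ']
  have hQskew : ∀ f g : Module.Dual k A, f (Q g) = - g (Q f) := by
    intro f g
    rw [hQapp, hQapp, hfB f, hfB g, hskew, hBsymm]
  have hanti : tauT r = - r := by
    have hz : tauT r + r = 0 := by
      apply sep2
      intro f g
      rw [hrexp]
      simp only [map_add, map_sum, tauT_tmul', contractL_tmul, map_smul, smul_eq_mul]
      have h1 : ∑ i, f (Q (e.coord i)) * g (e i) = f (Q g) := by
        rw [← sum_eval Q e g f]
        exact Finset.sum_congr rfl fun i _ => mul_comm _ _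
      have h2 : ∑ i, f (e i) * g (Q (e.coord i)) = g (Q f) := sum_eval Q e f g
      rw [h1, h2, hQskew f g]
      ring
    exact eq_neg_of_add_eq_zero_left hz
  refine ⟨hanti, ?_, ?_⟩
  · -- cybe
    apply sep3
    intro f g h
    unfold cybe
    rw [hrexp]
    simp only [TensorProduct.sum_tmul, TensorProduct.tmul_sum, map_add, map_sum,
      T1213_tmul, T1323_tmul, T1223_tmul, contractL_tmul, map_smul, smul_eq_mul]
    have key1 : ∑ j, ∑ i, f (br (e i) (e j)) * (g (Q (e.coord i)) * h (Q (e.coord j)))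
        = h (P (br (P (IB g)) (IB f))) := by
      have inner : ∀ j, ∑ i, f (br (e i) (e j)) * (g (Q (e.coord i)) * h (Q (e.coord j)))
          = g (P (br (e j) (IB f))) * h (Q (e.coord j)) := by
        intro j
        have hstep : ∀ i, f (br (e i) (e j)) * (g (Q (e.coord i)) * h (Q (e.coord j)))
            = ((f ∘ₗ br.flip (e j)) (e i) * g (Q (e.coord i))) * h (Q (e.coord j)) := by
          intro i; simp only [LinearMap.comp_apply, LinearMap.flip_apply]; ring
        rw [Finset.sum_congr rfl fun i _ => hstep i, ← Finset.sum_mul,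
          sum_eval Q e (f ∘ₗ br.flip (e j)) g]
        have hform : Q (f ∘ₗ br.flip (e j)) = P (br (e j) (IB f)) := by
          apply hQform
          intro y
          simp only [LinearMap.comp_apply, LinearMap.flip_apply]
          rw [hfB f, hBsymm, hbrinv, hBsymm]
        rw [hform]
      rw [Finset.sum_congr rfl fun j _ => inner j]
      have hstep2 : ∀ j, g (P (br (e j) (IB f))) * h (Q (e.coord j))
          = ((g ∘ₗ P ∘ₗ br.flip (IB f)) (e j)) * h (Q (e.coord j)) := fun j => rfl
      rw [Finset.sum_congr rfl fun j _ => hstep2 j,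
        sum_eval Q e (g ∘ₗ P ∘ₗ br.flip (IB f)) h]
      congr 1
      apply hQform
      intro y
      simp only [LinearMap.comp_apply, LinearMap.flip_apply]
      rw [hfB g, hskew, hBsymm (P (IB g)), hbrinv,
        hpoisson.antisymm (IB f) (P (IB g)), map_neg, neg_neg, hBsymm y]
    have key2 : ∑ j, ∑ i, f (e i) * (g (e j) * h (br (Q (e.coord i)) (Q (e.coord j))))
        = h (br (P (IB f)) (P (IB g))) := by
      rw [Finset.sum_comm]
      have inner : ∀ i, ∑ j, f (e i) * (g (e j) * h (br (Q (e.coord i)) (Q (e.coord j))))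
          = f (e i) * h (br (Q (e.coord i)) (Q g)) := by
        intro i
        rw [← Finset.mul_sum]
        congr 1
        exact sum_eval Q e g (h ∘ₗ br (Q (e.coord i)))
      rw [Finset.sum_congr rfl fun i _ => inner i]
      exact sum_eval Q e f (h ∘ₗ br.flip (Q g))
    have key3 : ∑ j, ∑ i, f (e i) * (g (br (Q (e.coord i)) (e j)) * h (Q (e.coord j)))
        = h (P (br (IB g) (P (IB f)))) := by
      have inner : ∀ j, ∑ i, f (e i) * (g (br (Q (e.coord i)) (e j)) * h (Q (e.coord j)))
          = g (br (Q f) (e j)) * h (Q (e.coord j)) := by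
        intro j
        have hstep : ∀ i, f (e i) * (g (br (Q (e.coord i)) (e j)) * h (Q (e.coord j)))
            = (f (e i) * (g ∘ₗ br.flip (e j)) (Q (e.coord i))) * h (Q (e.coord j)) := by
          intro i; simp only [LinearMap.comp_apply, LinearMap.flip_apply]; ring
        rw [Finset.sum_congr rfl fun i _ => hstep i, ← Finset.sum_mul,
          sum_eval Q e f (g ∘ₗ br.flip (e j))]
        rfl
      rw [Finset.sum_congr rfl fun j _ => inner j]
      have hstep2 : ∀ j, g (br (Q f) (e j)) * h (Q (e.coord j))
          = ((g ∘ₗ br (Q f)) (e j)) * h (Q (e.coord j)) := fun j => rfl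
      rw [Finset.sum_congr rfl fun j _ => hstep2 j, sum_eval Q e (g ∘ₗ br (Q f)) h]
      congr 1
      apply hQform
      intro y
      simp only [LinearMap.comp_apply]
      rw [hQapp, hfB g, ← hbrinv]
    rw [key1, key2, key3, hrbbr' (IB f) (IB g),
      hpoisson.antisymm (P (IB g)) (IB f), hpoisson.antisymm (IB g) (P (IB f))]
    simp only [map_neg, map_add]
    ring
  · -- aybe
    apply sep3
    intro f g h
    unfold aybe
    rw [hrexp]
    simp only [TensorProduct.sum_tmul, TensorProduct.tmul_sum, map_add, map_sub, map_sum,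
      T1213_tmul, T1323_tmul, T2312_tmul, contractL_tmul, map_smul, smul_eq_mul]
    have key1 : ∑ j, ∑ i, f (mul (e i) (e j)) * (g (Q (e.coord i)) * h (Q (e.coord j)))
        = h (P (-(mul (IB f) (P (IB g))))) := by
      have inner : ∀ j, ∑ i, f (mul (e i) (e j)) * (g (Q (e.coord i)) * h (Q (e.coord j)))
          = g (P (mul (e j) (IB f))) * h (Q (e.coord j)) := by
        intro j
        have hstep : ∀ i, f (mul (e i) (e j)) * (g (Q (e.coord i)) * h (Q (e.coord j)))
            = ((f ∘ₗ mul.flip (e j)) (e i) * g (Q (e.coord i))) * h (Q (e.coord j)) := by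
          intro i; simp only [LinearMap.comp_apply, LinearMap.flip_apply]; ring
        rw [Finset.sum_congr rfl fun i _ => hstep i, ← Finset.sum_mul,
          sum_eval Q e (f ∘ₗ mul.flip (e j)) g]
        have hform : Q (f ∘ₗ mul.flip (e j)) = P (mul (e j) (IB f)) := by
          apply hQform
          intro y
          simp only [LinearMap.comp_apply, LinearMap.flip_apply]
          rw [hfB f, hBsymm, hmulinv, hBsymm]
        rw [hform]
      rw [Finset.sum_congr rfl fun j _ => inner j]
      have hstep2 : ∀ j, g (P (mul (e j) (IB f))) * h (Q (e.coord j))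
          = ((g ∘ₗ P ∘ₗ mul.flip (IB f)) (e j)) * h (Q (e.coord j)) := fun j => rfl
      rw [Finset.sum_congr rfl fun j _ => hstep2 j,
        sum_eval Q e (g ∘ₗ P ∘ₗ mul.flip (IB f)) h]
      congr 1
      apply hQform
      intro y
      simp only [LinearMap.comp_apply, LinearMap.flip_apply, map_neg, LinearMap.neg_apply]
      rw [hfB g, hskew, hBsymm (P (IB g)), hmulinv, hBsymm y]
    have key2 : ∑ j, ∑ i, f (e i) * (g (e j) * h (mul (Q (e.coord i)) (Q (e.coord j))))
        = h (mul (P (IB f)) (P (IB g))) := by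
      rw [Finset.sum_comm]
      have inner : ∀ i, ∑ j, f (e i) * (g (e j) * h (mul (Q (e.coord i)) (Q (e.coord j))))
          = f (e i) * h (mul (Q (e.coord i)) (Q g)) := by
        intro i
        rw [← Finset.mul_sum]
        congr 1
        exact sum_eval Q e g (h ∘ₗ mul (Q (e.coord i)))
      rw [Finset.sum_congr rfl fun i _ => inner i]
      exact sum_eval Q e f (h ∘ₗ mul.flip (Q g))
    have key3 : ∑ j, ∑ i, f (e i) * (g (mul (e j) (Q (e.coord i))) * h (Q (e.coord j)))
        = h (P (mul (P (IB f)) (IB g))) := by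
      have inner : ∀ j, ∑ i, f (e i) * (g (mul (e j) (Q (e.coord i))) * h (Q (e.coord j)))
          = g (mul (e j) (Q f)) * h (Q (e.coord j)) := by
        intro j
        have hstep : ∀ i, f (e i) * (g (mul (e j) (Q (e.coord i))) * h (Q (e.coord j)))
            = (f (e i) * (g ∘ₗ mul (e j)) (Q (e.coord i))) * h (Q (e.coord j)) := by
          intro i; simp only [LinearMap.comp_apply]; ring
        rw [Finset.sum_congr rfl fun i _ => hstep i, ← Finset.sum_mul,
          sum_eval Q e f (g ∘ₗ mul (e j))]
        rfl
      rw [Finset.sum_congr rfl fun j _ => inner j]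
      have hstep2 : ∀ j, g (mul (e j) (Q f)) * h (Q (e.coord j))
          = ((g ∘ₗ mul.flip (Q f)) (e j)) * h (Q (e.coord j)) := fun j => rfl
      rw [Finset.sum_congr rfl fun j _ => hstep2 j, sum_eval Q e (g ∘ₗ mul.flip (Q f)) h]
      congr 1
      apply hQform
      intro y
      simp only [LinearMap.comp_apply, LinearMap.flip_apply]
      rw [hQapp, hfB g, hBsymm (IB g), hmulinv, hBsymm y]
    rw [key1, key2, key3, hrbmul' (IB f) (IB g)]
    simp only [map_neg, map_add]
    ring
end

section
/- Let (A,[·,·],·) be a finite-dimensional Poisson algebra over a field, let r ∈ A⊗A be a solution of the Poisson Yang–Baxter equation whose symmetric part is (ad,L)-invariant and with I_r = r₊ − r₋ a linear isomorphism, fix λ ≠ 0, and let P = −λ·r₊ ∘ I_r⁻¹ be the induced Rota–Baxter operator of weight λ with descendent Poisson algebra (A,[·,·]_P,·_P). Then the map −(1/λ)·I_r: A* → A is a Poisson algebra isomorphism from (A*,[·,·]_r,·_r) to (A,[·,·]_P,·_P); explicitly, −(1/λ)I_r([x*,y*]_r) = [−(1/λ)I_r(x*), −(1/λ)I_r(y*)]_P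 and −(1/λ)I_r(x*·_r y*) = (−(1/λ)I_r(x*))·_P(−(1/λ)I_r(y*)) for all x*,y* ∈ A*. -/
open TensorProduct

section Aux

variable {k A : Type*} [Field k] [AddCommGroup A] [Module k A]

lemma rPlus_map_left (g : A →ₗ[k] A) (t : A ⊗[k] A) (y : Module.Dual k A) :
    rPlus (TensorProduct.map g LinearMap.id t) y = rPlus t (g.dualMap y) := by
  induction t using TensorProduct.induction_on with
  | zero => simp
  | tmul a b => simp [rPlus_tmul]
  | add u v hu hv => simp [map_add, hu, hv]

lemma rPlus_map_right (f : A →ₗ[k] A) (t : A ⊗[k] A) (y : Module.Dual k A) :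
    rPlus (TensorProduct.map LinearMap.id f t) y = f (rPlus t y) := by
  induction t using TensorProduct.induction_on with
  | zero => simp
  | tmul a b => simp [rPlus_tmul]
  | add u v hu hv => simp [map_add, hu, hv]

lemma tauT_map (f g : A →ₗ[k] A) (t : A ⊗[k] A) :
    tauT (TensorProduct.map f g t) = TensorProduct.map g f (tauT t) := by
  induction t using TensorProduct.induction_on with
  | zero => simp
  | tmul a b => simp [tauT]
  | add u v hu hv => simp [map_add, hu, hv]

end Aux

/-- for a factorizable Poisson bialgebra with induced Rota–Baxter operator
`P = −λ·r₊ ∘ I_r⁻¹` of weight `λ ≠ 0`, the map `−(1/λ)·I_r : A* → A` is a Poisson algebra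
isomorphism from `(A*, [·,·]_r, ·_r)` to the descendent Poisson algebra
`(A, [·,·]_P, ·_P)`. -/
theorem statement17 {k A : Type*} [Field k] [AddCommGroup A] [Module k A]
    [FiniteDimensional k A]
    (br mul : A →ₗ[k] A →ₗ[k] A) (hP : IsPoisson br mul)
    (r S Lam : A ⊗[k] A) (hdec : r = S + Lam) (hS : tauT S = S) (hLam : tauT Lam = - Lam)
    (hr : IsPYBESolution br mul r) (hinv : IsAdLInvariant br mul S)
    (Ir : Module.Dual k A ≃ₗ[k] A) (hIr : ∀ x, Ir x = rPlus r x - rMinus r x)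
    (lam : k) (hlam : lam ≠ 0) :
    Function.Bijective (fun x : Module.Dual k A => -(lam⁻¹ • Ir x)) ∧
    (∀ x y : Module.Dual k A,
      -(lam⁻¹ • Ir (dualBr br r x y)) =
        descOp br lam ((-lam) • ((rPlus r) ∘ₗ Ir.symm.toLinearMap))
          (-(lam⁻¹ • Ir x)) (-(lam⁻¹ • Ir y)) ∧
      -(lam⁻¹ • Ir (dualMul mul r x y)) =
        descOp mul lam ((-lam) • ((rPlus r) ∘ₗ Ir.symm.toLinearMap))
          (-(lam⁻¹ • Ir x)) (-(lam⁻¹ • Ir y))) := by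
  have hq : ∀ z : Module.Dual k A, rMinus r z = rPlus r z - Ir z := by
    intro z; rw [hIr z]; abel
  have hIr2 : ∀ z : Module.Dual k A, Ir z = rPlus S z + rPlus S z := by
    intro z
    have ht : tauT r = S - Lam := by rw [hdec, map_add, hS, hLam]; abel
    rw [hIr z]
    simp only [rMinus, LinearMap.neg_apply, LinearMap.comp_apply, ht, hdec, map_add, map_sub,
      LinearMap.add_apply, LinearMap.sub_apply, map_neg, hS, hLam, LinearMap.neg_apply]
    abel
  have hSbr : ∀ (a : A) (y : Module.Dual k A),
      rPlus S ((br a).dualMap y) = - (br a (rPlus S y)) := by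
    intro a y
    have h2 := congrArg (fun t => rPlus (tauT t) y) (hinv a).1
    simp only [map_add, map_zero, tauT_map, hS, rPlus_map_left,
      rPlus_map_right, LinearMap.add_apply, LinearMap.zero_apply] at h2
    rw [eq_neg_iff_add_eq_zero, add_comm]
    exact h2
  have hSmul : ∀ (a : A) (y : Module.Dual k A),
      rPlus S ((mul a).dualMap y) = mul a (rPlus S y) := by
    intro a y
    have h2 := congrArg (fun t => rPlus (tauT t) y) (hinv a).2
    simp only [map_sub, map_zero, tauT_map, hS, rPlus_map_left,
      rPlus_map_right, LinearMap.sub_apply, LinearMap.zero_apply] at h2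
    exact (sub_eq_zero.mp h2).symm
  have key_br : ∀ (a : A) (y : Module.Dual k A),
      Ir ((br a).dualMap y) = - br a (Ir y) := by
    intro a y
    rw [hIr2, hSbr, hIr2 y, map_add]
    abel
  have key_mul : ∀ (a : A) (y : Module.Dual k A),
      Ir ((mul a).dualMap y) = mul a (Ir y) := by
    intro a y
    rw [hIr2, hSmul, hIr2 y, map_add]
  have hPapply : ∀ x : Module.Dual k A,
      ((-lam) • ((rPlus r) ∘ₗ Ir.symm.toLinearMap)) (-(lam⁻¹ • Ir x)) = rPlus r x := by
    intro x
    simp only [LinearMap.smul_apply, LinearMap.comp_apply, LinearEquiv.coe_coe, map_neg,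
      map_smul, LinearEquiv.symm_apply_apply, smul_neg, neg_neg, smul_smul]
    rw [mul_neg, inv_mul_cancel₀ hlam, neg_smul, one_smul, neg_neg]
  refine ⟨⟨?_, ?_⟩, ?_⟩
  · intro x y h
    have h2 : Ir x = Ir y := by
      have := neg_injective h
      have := smul_right_injective A (inv_ne_zero hlam) this
      exact this
    exact Ir.injective h2
  · intro a
    refine ⟨Ir.symm (-(lam • a)), ?_⟩
    simp only [LinearEquiv.apply_symm_apply, smul_neg, neg_neg, smul_smul,
      inv_mul_cancel₀ hlam, one_smul]
  · intro x y
    constructor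
    · have hD : Ir (dualBr br r x y)
          = br (rPlus r x) (Ir y) - br (rMinus r y) (Ir x) := by
        simp only [dualBr, LinearMap.mk₂_apply, map_add, map_neg, key_br]
        abel
      rw [hD, hq y]
      simp only [descOp, LinearMap.mk₂_apply, hPapply]
      simp only [map_sub, LinearMap.sub_apply, map_neg, map_smul, LinearMap.neg_apply,
        LinearMap.smul_apply, smul_neg, neg_neg, smul_smul, smul_sub, smul_add, neg_add,
        neg_sub, sub_neg_eq_add]
      rw [hP.antisymm (rPlus r y) (Ir x), hP.antisymm (Ir y) (Ir x)]
      match_scalars <;> field_simp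
    · have hD : Ir (dualMul mul r x y)
          = mul (rPlus r x) (Ir y) + mul (rMinus r y) (Ir x) := by
        simp only [dualMul, LinearMap.mk₂_apply, map_add, key_mul]
      rw [hD, hq y]
      simp only [descOp, LinearMap.mk₂_apply, hPapply]
      simp only [map_sub, LinearMap.sub_apply, map_neg, map_smul, LinearMap.neg_apply,
        LinearMap.smul_apply, smul_neg, neg_neg, smul_smul, smul_sub, smul_add, neg_add,
        neg_sub, sub_neg_eq_add]
      rw [hP.comm (rPlus r y) (Ir x), hP.comm (Ir y) (Ir x)]
      match_scalars <;> field_simp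
end
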